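/- arXiv:2111.01279 — 3 statements merged into one kernel-verified Lean document; each statement's English description precedes it below -/
import Mathlib

section
/- The number of ascent sequences of length n avoiding the pattern 102 is (3^{n−1} + 1)/2 for n ≥ 1 (equivalently, twice the count is 3^{n−1} + 1). -/
open Filter Topology

/-- Number of ascents in a sequence (list) of naturals. -/
def asc (s : List ℕ) : ℕ :=
  ((s.zip s.tail).filter (fun p => p.1 < p.2)).length

/-- `s` is an ascent sequence: first entry `0`, and each later entry is at most
one more than the number of ascents of the preceding prefix. -/
def IsAscentSeq (s : List ℕ) : Prop :=
  (0 < s.length → s.getD 0 0 = 0) ∧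
  ∀ i, 0 < i → i < s.length → s.getD i 0 ≤ asc (s.take i) + 1

/-- `s` is a weak ascent sequence: every entry is at most the number of ascents. -/
def IsWeakAscentSeq (s : List ℕ) : Prop :=
  ∀ x ∈ s, x ≤ asc s

/-- `s` contains the pattern `p`: some subsequence of `s` is order-isomorphic
(including equalities) to `p`. -/
def ContainsPattern (s p : List ℕ) : Prop :=
  ∃ idx : Fin p.length → ℕ, StrictMono idx ∧ (∀ a, idx a < s.length) ∧
    ∀ a b : Fin p.length, p.get a < p.get b ↔ s.getD (idx a) 0 < s.getD (idx b) 0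

def AvoidsPattern (s p : List ℕ) : Prop := ¬ ContainsPattern s p

/-- A pattern of length `j` is a permutation of `0,…,j-1`. -/
def IsPattern (p : List ℕ) : Prop := List.Perm p (List.range p.length)

/-- Sum-indecomposable: no proper prefix whose entries are all smaller than
all entries of the complementary suffix. -/
def SumIndecomposable (p : List ℕ) : Prop :=
  ¬ ∃ i, 0 < i ∧ i < p.length ∧ ∀ x ∈ p.take i, ∀ y ∈ p.drop i, x < y

/-- Number of `p`-avoiding ascent sequences of length `k`. -/
noncomputable def ascentAvoidCount (p : List ℕ) (k : ℕ) : ℕ :=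
  {s : List ℕ | s.length = k ∧ IsAscentSeq s ∧ AvoidsPattern s p}.ncard

/-- Number of `p`-avoiding weak ascent sequences of length `k`. -/
noncomputable def weakAvoidCount (p : List ℕ) (k : ℕ) : ℕ :=
  {s : List ℕ | s.length = k ∧ IsWeakAscentSeq s ∧ AvoidsPattern s p}.ncard

def listMax (s : List ℕ) : ℕ := s.foldr max 0
def listMin (s : List ℕ) : ℕ := s.foldr min (listMax s)

/-- Reverse-complement map: `m j = max + min - n (k+1-j)`. -/
def revComp (s : List ℕ) : List ℕ :=
  s.reverse.map (fun x => listMax s + listMin s - x)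

/-- Occurrence of pattern 000: three equal entries. -/
def Contains000 (s : List ℕ) : Prop :=
  ∃ a b c, a < b ∧ b < c ∧ c < s.length ∧
    s.getD a 0 = s.getD b 0 ∧ s.getD b 0 = s.getD c 0

/-- Occurrence of pattern 100: `n i₁ > n i₂ = n i₃`. -/
def Contains100 (s : List ℕ) : Prop :=
  ∃ a b c, a < b ∧ b < c ∧ c < s.length ∧
    s.getD b 0 < s.getD a 0 ∧ s.getD b 0 = s.getD c 0

/-- Occurrence of pattern 110: `n i₁ = n i₂ > n i₃`. -/
def Contains110 (s : List ℕ) : Prop :=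
  ∃ a b c, a < b ∧ b < c ∧ c < s.length ∧
    s.getD a 0 = s.getD b 0 ∧ s.getD c 0 < s.getD b 0

/-- Occurrence of pattern 120: `n i₂ > n i₁ > n i₃`. -/
def Contains120 (s : List ℕ) : Prop :=
  ∃ a b c, a < b ∧ b < c ∧ c < s.length ∧
    s.getD a 0 < s.getD b 0 ∧ s.getD c 0 < s.getD a 0

/-- Occurrence of pattern 201: `n i₁ > n i₃ > n i₂`. -/
def Contains201 (s : List ℕ) : Prop :=
  ∃ a b c, a < b ∧ b < c ∧ c < s.length ∧
    s.getD c 0 < s.getD a 0 ∧ s.getD b 0 < s.getD c 0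

/-- Occurrence of pattern 012: `n i₁ < n i₂ < n i₃`. -/
def Contains012 (s : List ℕ) : Prop :=
  ∃ a b c, a < b ∧ b < c ∧ c < s.length ∧
    s.getD a 0 < s.getD b 0 ∧ s.getD b 0 < s.getD c 0

/-- Occurrence of pattern 011: `n i₁ < n i₂ = n i₃`. -/
def Contains011 (s : List ℕ) : Prop :=
  ∃ a b c, a < b ∧ b < c ∧ c < s.length ∧
    s.getD a 0 < s.getD b 0 ∧ s.getD b 0 = s.getD c 0

/-- Occurrence of pattern 021: `n i₁ < n i₃ < n i₂`. -/
def Contains021 (s : List ℕ) : Prop :=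
  ∃ a b c, a < b ∧ b < c ∧ c < s.length ∧
    s.getD a 0 < s.getD c 0 ∧ s.getD c 0 < s.getD b 0

/-- Occurrence of pattern 102: `n i₂ < n i₁ < n i₃`. -/
def Contains102 (s : List ℕ) : Prop :=
  ∃ a b c, a < b ∧ b < c ∧ c < s.length ∧
    s.getD b 0 < s.getD a 0 ∧ s.getD a 0 < s.getD c 0

/-- The construction `C = 0101⋯01 W̃₁⋯W̃ₖ` from weak ascent sequences. -/
def buildC (k : ℕ) (W : Fin k → List ℕ) : List ℕ :=
  (List.replicate k ([0,1] : List ℕ)).flatten ++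
    (List.ofFn (fun h : Fin k =>
      (W h).map (fun x =>
        x + 1 + ∑ j ∈ Finset.univ.filter (fun j => j < h), listMax (W j)))).flatten

/-! ### Section 1 : asc -/

lemma asc_cons_cons (a b : ℕ) (l : List ℕ) :
    asc (a :: b :: l) = (if a < b then 1 else 0) + asc (b :: l) := by
  simp only [asc, List.tail_cons, List.zip_cons_cons, List.filter_cons]
  split <;> rename_i h <;> simp at h <;> simp [h, Nat.add_comm]

lemma asc_single (a : ℕ) : asc [a] = 0 := rfl

lemma asc_le_append (l t : List ℕ) : asc l ≤ asc (l ++ t) := by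
  induction l with
  | nil => simp [asc]
  | cons a l ih =>
    cases l with
    | nil => simp [asc_single, asc]
    | cons b u =>
      rw [List.cons_append, List.cons_append, asc_cons_cons, asc_cons_cons]
      rw [List.cons_append] at ih
      omega

lemma asc_take_le (l : List ℕ) (i : ℕ) : asc (l.take i) ≤ asc l := by
  have := asc_le_append (l.take i) (l.drop i)
  rwa [List.take_append_drop] at this

lemma asc_append_singleton (l : List ℕ) (hl : l ≠ []) (v : ℕ) :
    asc (l ++ [v]) = asc l + (if l.getD (l.length - 1) 0 < v then 1 else 0) := by
  induction l with
  | nil => simp at hl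
  | cons a l ih =>
    cases l with
    | nil =>
      show asc [a, v] = _
      rw [asc_cons_cons, asc_single, asc_single]
      simp
    | cons b u =>
      rw [List.cons_append, List.cons_append, asc_cons_cons,
        show b :: (u ++ [v]) = (b :: u) ++ [v] from (List.cons_append ..).symm,
        ih (by simp), asc_cons_cons]
      have h2 : (a :: b :: u).getD ((a :: b :: u).length - 1) 0
           = (b :: u).getD ((b :: u).length - 1) 0 := by
        simp [List.getD_cons_succ]
      rw [h2]
      omega

/-! ### Section 2 : append characterizations -/

lemma getD_append_left (l : List ℕ) (v : ℕ) {i : ℕ} (h : i < l.length) :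
    (l ++ [v]).getD i 0 = l.getD i 0 := List.getD_append _ _ _ _ h

lemma getD_append_self (l : List ℕ) (v : ℕ) :
    (l ++ [v]).getD l.length 0 = v := by
  rw [List.getD_append_right _ _ _ _ (le_refl _)]
  simp

lemma isAscentSeq_append_iff (l : List ℕ) (hl : l ≠ []) (v : ℕ) :
    IsAscentSeq (l ++ [v]) ↔ IsAscentSeq l ∧ v ≤ asc l + 1 := by
  have hlen : 0 < l.length := List.length_pos_iff.2 hl
  constructor
  · rintro ⟨h0, h1⟩
    refine ⟨⟨fun _ => ?_, fun i hi hi' => ?_⟩, ?_⟩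
    · have := h0 (by simp)
      rwa [getD_append_left _ _ hlen] at this
    · have := h1 i hi (by simp; omega)
      rwa [getD_append_left _ _ hi', List.take_append_of_le_length (le_of_lt hi')] at this
    · have := h1 l.length hlen (by simp)
      rwa [getD_append_self, List.take_append_of_le_length (le_refl _),
        List.take_length] at this
  · rintro ⟨⟨h0, h1⟩, hv⟩
    refine ⟨fun _ => ?_, fun i hi hi' => ?_⟩
    · rw [getD_append_left _ _ hlen]; exact h0 hlen
    · simp only [List.length_append, List.length_singleton] at hi'
      rcases lt_or_eq_of_le (Nat.lt_succ_iff.1 hi') with h | h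
      · rw [getD_append_left _ _ h, List.take_append_of_le_length (le_of_lt h)]
        exact h1 i hi h
      · subst h
        rw [getD_append_self, List.take_append_of_le_length (le_refl _), List.take_length]
        exact hv

lemma contains102_append_iff (l : List ℕ) (v : ℕ) :
    Contains102 (l ++ [v]) ↔ Contains102 l ∨
      ∃ a b, a < b ∧ b < l.length ∧ l.getD b 0 < l.getD a 0 ∧ l.getD a 0 < v := by
  constructor
  · rintro ⟨a, b, c, hab, hbc, hc, h1, h2⟩
    simp only [List.length_append, List.length_singleton] at hc
    rcases lt_or_eq_of_le (Nat.lt_succ_iff.1 hc) with h | h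
    · left
      refine ⟨a, b, c, hab, hbc, h, ?_, ?_⟩
      · rwa [getD_append_left _ _ (by omega), getD_append_left _ _ (by omega)] at h1
      · rwa [getD_append_left _ _ (by omega), getD_append_left _ _ (by omega)] at h2
    · right
      subst h
      refine ⟨a, b, hab, hbc, ?_, ?_⟩
      · rwa [getD_append_left _ _ (by omega), getD_append_left _ _ (by omega)] at h1
      · rwa [getD_append_left _ _ (by omega), getD_append_self] at h2
  · rintro (⟨a, b, c, hab, hbc, hc, h1, h2⟩ | ⟨a, b, hab, hb, h1, h2⟩)
    · refine ⟨a, b, c, hab, hbc, by simp; omega, ?_, ?_⟩ <;>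
        rw [getD_append_left _ _ (by omega), getD_append_left _ _ (by omega)]
      exacts [h1, h2]
    · refine ⟨a, b, l.length, hab, hb, by simp, ?_, ?_⟩
      · rw [getD_append_left _ _ (by omega), getD_append_left _ _ (by omega)]; exact h1
      · rw [getD_append_left _ _ (by omega), getD_append_self]; exact h2

/-! ### Section 3 : listMax -/

lemma le_listMax_of_mem {x : ℕ} {s : List ℕ} (h : x ∈ s) : x ≤ listMax s := by
  induction s with
  | nil => simp at h
  | cons a t ih =>
    rcases List.mem_cons.1 h with rfl | h
    · exact le_max_left _ _
    · exact le_trans (ih h) (le_max_right _ _)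

lemma listMax_mem {s : List ℕ} (h : s ≠ []) : listMax s ∈ s := by
  induction s with
  | nil => simp at h
  | cons a t ih =>
    cases t with
    | nil => simp [listMax]
    | cons b u =>
      rcases max_cases a (listMax (b :: u)) with ⟨h1, _⟩ | ⟨h1, _⟩
      · rw [show listMax (a :: b :: u) = max a (listMax (b::u)) from rfl, h1]
        exact List.mem_cons_self
      · rw [show listMax (a :: b :: u) = max a (listMax (b::u)) from rfl, h1]
        exact List.mem_cons_of_mem _ (ih (by simp))

lemma getD_le_listMax (s : List ℕ) {i : ℕ} (h : i < s.length) :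
    s.getD i 0 ≤ listMax s := by
  apply le_listMax_of_mem
  rw [List.getD_eq_getElem _ _ h]
  exact List.getElem_mem _

lemma listMax_append_singleton (l : List ℕ) (v : ℕ) :
    listMax (l ++ [v]) = max (listMax l) v := by
  induction l with
  | nil => simp [listMax]
  | cons a t ih =>
    show max a (listMax (t ++ [v])) = max (max a (listMax t)) v
    rw [ih, max_assoc]

/-! ### Section 4 : the bound statistic -/

/-- Set of deficient indices: positions with a strictly larger earlier entry. -/
def dset (s : List ℕ) : Finset ℕ :=
  (Finset.range s.length).filter (fun j => ∃ i ∈ Finset.range j, s.getD j 0 < s.getD i 0)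

def bset (s : List ℕ) : Finset ℕ :=
  insert (listMax s + 1) ((dset s).image (fun j => s.getD j 0 + 1))

lemma bset_nonempty (s : List ℕ) : (bset s).Nonempty :=
  ⟨_, Finset.mem_insert_self _ _⟩

/-- The extension bound. -/
def bnd (s : List ℕ) : ℕ := (bset s).min' (bset_nonempty s)

/-- Weakly increasing in index form. -/
def WkInc (s : List ℕ) : Prop :=
  ∀ i j, i < j → j < s.length → s.getD i 0 ≤ s.getD j 0

lemma mem_dset_iff {s : List ℕ} {j : ℕ} :
    j ∈ dset s ↔ j < s.length ∧ ∃ i < j, s.getD j 0 < s.getD i 0 := by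
  simp [dset]

lemma wkInc_iff_dset_empty {s : List ℕ} : WkInc s ↔ dset s = ∅ := by
  constructor
  · intro h
    apply Finset.eq_empty_of_forall_notMem
    intro j hj
    rw [mem_dset_iff] at hj
    obtain ⟨hj, i, hij, hlt⟩ := hj
    exact absurd (h i j hij hj) (by omega)
  · intro h i j hij hj
    by_contra hc
    have : j ∈ dset s := mem_dset_iff.2 ⟨hj, i, hij, by omega⟩
    simp [h] at this

lemma bnd_le_listMax_add_one (s : List ℕ) : bnd s ≤ listMax s + 1 :=
  Finset.min'_le _ _ (Finset.mem_insert_self _ _)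

lemma bnd_le_of_def {s : List ℕ} {i j : ℕ} (hij : i < j) (hj : j < s.length)
    (h : s.getD j 0 < s.getD i 0) : bnd s ≤ s.getD j 0 + 1 :=
  Finset.min'_le _ _ (Finset.mem_insert_of_mem
    (Finset.mem_image_of_mem _ (mem_dset_iff.2 ⟨hj, i, hij, h⟩)))

lemma mem_bset_iff {s : List ℕ} {x : ℕ} :
    x ∈ bset s ↔ x = listMax s + 1 ∨ ∃ j ∈ dset s, s.getD j 0 + 1 = x := by
  constructor
  · intro h
    rcases Finset.mem_insert.1 h with h | h
    · exact Or.inl h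
    · obtain ⟨j, hj, hje⟩ := Finset.mem_image.1 h
      exact Or.inr ⟨j, hj, hje⟩
  · rintro (rfl | ⟨j, hj, rfl⟩)
    · exact Finset.mem_insert_self _ _
    · exact Finset.mem_insert_of_mem (Finset.mem_image_of_mem _ hj)

lemma bnd_pos (s : List ℕ) : 1 ≤ bnd s := by
  have h : bnd s ∈ bset s := Finset.min'_mem (bset s) (bset_nonempty s)
  rcases mem_bset_iff.1 h with h | ⟨j, _, hj⟩ <;> omega

lemma bnd_of_wkInc {s : List ℕ} (h : WkInc s) : bnd s = listMax s + 1 := by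
  refine le_antisymm (bnd_le_listMax_add_one s) (Finset.le_min' _ _ _ ?_)
  intro y hy
  rcases mem_bset_iff.1 hy with rfl | ⟨j, hj, rfl⟩
  · exact le_refl _
  · rw [wkInc_iff_dset_empty.1 h] at hj
    simp at hj

lemma bnd_spec {s : List ℕ} (h : ¬ WkInc s) :
    ∃ j < s.length, (∃ i < j, s.getD j 0 < s.getD i 0) ∧ bnd s = s.getD j 0 + 1 := by
  rw [wkInc_iff_dset_empty] at h
  obtain ⟨j0, hj0⟩ := Finset.nonempty_iff_ne_empty.2 h
  rw [mem_dset_iff] at hj0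
  obtain ⟨hj0len, i0, hi0, hlt0⟩ := hj0
  have hmem : bnd s ∈ bset s := Finset.min'_mem (bset s) (bset_nonempty s)
  rcases mem_bset_iff.1 hmem with hm | ⟨j, hj, hjeq⟩
  · exfalso
    have h1 : bnd s ≤ s.getD j0 0 + 1 := bnd_le_of_def hi0 hj0len hlt0
    have h2 : s.getD i0 0 ≤ listMax s := getD_le_listMax s (by omega)
    omega
  · rw [mem_dset_iff] at hj
    exact ⟨j, hj.1, hj.2, hjeq.symm⟩

/-- Deficient case: the bound is at most the max. -/
lemma bnd_le_listMax_of_not_wkInc {s : List ℕ} (h : ¬ WkInc s) : bnd s ≤ listMax s := by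
  obtain ⟨j, hj, ⟨i, hij, hlt⟩, heq⟩ := bnd_spec h
  have := getD_le_listMax s (show i < s.length by omega)
  omega

def Good (s : List ℕ) : Prop := IsAscentSeq s ∧ ¬ Contains102 s

/-! ### Section 5 : core structural lemmas -/

lemma mem_le_asc' {s : List ℕ} (ha : IsAscentSeq s) {i : ℕ} (hi : i < s.length) :
    s.getD i 0 ≤ asc s + 1 := by
  rcases Nat.eq_zero_or_pos i with rfl | hip
  · rw [ha.1 (by omega)]; omega
  · exact le_trans (ha.2 i hip hi) (by have := asc_take_le s i; omega)

lemma getD_take {s : List ℕ} {p q : ℕ} (hq : q < p) (hp : p ≤ s.length) :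
    (s.take p).getD q 0 = s.getD q 0 := by
  have h1 : q < (s.take p).length := by simp; omega
  rw [List.getD_eq_getElem _ _ h1, List.getD_eq_getElem _ _ (by omega)]
  exact List.getElem_take

lemma wkInc_tail {a : ℕ} {t : List ℕ} (h : WkInc (a :: t)) : WkInc t := by
  intro i j hij hj
  have := h (i+1) (j+1) (by omega) (by simp; omega)
  simpa [List.getD_cons_succ] using this

lemma wkInc_append_iff {s : List ℕ} (hs : s ≠ []) (v : ℕ) :
    WkInc (s ++ [v]) ↔ WkInc s ∧ listMax s ≤ v := by
  constructor
  · intro h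
    constructor
    · intro i j hij hj
      have := h i j hij (by simp; omega)
      rwa [getD_append_left _ _ (by omega), getD_append_left _ _ hj] at this
    · obtain ⟨k, hk, hke⟩ := List.mem_iff_getElem.1 (listMax_mem hs)
      rw [← List.getD_eq_getElem _ 0 hk] at hke
      have := h k s.length hk (by simp)
      rwa [getD_append_left _ _ hk, getD_append_self, hke] at this
  · rintro ⟨h, hv⟩ i j hij hj
    simp only [List.length_append, List.length_singleton] at hj
    rcases lt_or_eq_of_le (Nat.lt_succ_iff.1 hj) with hj' | hj'
    · rw [getD_append_left _ _ (by omega), getD_append_left _ _ hj']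
      exact h i j hij hj'
    · subst hj'
      rw [getD_append_left _ _ hij, getD_append_self]
      exact le_trans (getD_le_listMax s hij) hv

lemma asc_add_head_le_last {s : List ℕ} (h : WkInc s) (hs : s ≠ []) :
    asc s + s.getD 0 0 ≤ s.getD (s.length - 1) 0 := by
  induction s with
  | nil => simp at hs
  | cons a t ih =>
    cases t with
    | nil => simp [asc_single]
    | cons b u =>
      have hab : a ≤ b := by
        have := h 0 1 (by omega) (by simp)
        simpa using this
      have hrec := ih (wkInc_tail h) (by simp)
      rw [asc_cons_cons]
      have h2 : (a :: b :: u).getD ((a :: b :: u).length - 1) 0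
           = (b :: u).getD ((b :: u).length - 1) 0 := by
        simp [List.getD_cons_succ]
      rw [h2]
      simp only [List.getD_cons_zero] at hrec ⊢
      split <;> omega

lemma last_le_asc {s : List ℕ} (ha : IsAscentSeq s) (h : WkInc s) (hs : s ≠ []) :
    s.getD (s.length - 1) 0 ≤ asc s := by
  induction s using List.reverseRecOn with
  | nil => simp at hs
  | append_singleton l v ih =>
    cases eq_or_ne l [] with
    | inl hl =>
      subst hl
      have h0 := ha.1 (by simp)
      simpa [asc_single] using h0.le
    | inr hl =>
      rw [isAscentSeq_append_iff l hl v] at ha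
      have hlen : 0 < l.length := List.length_pos_iff.2 hl
      have hwl : WkInc l := ((wkInc_append_iff hl v).1 h).1
      have hlast : l.getD (l.length - 1) 0 ≤ v := by
        have hM := ((wkInc_append_iff hl v).1 h).2
        exact le_trans (getD_le_listMax l (by omega)) hM
      have hlen2 : (l ++ [v]).length - 1 = l.length := by simp
      rw [hlen2, getD_append_self, asc_append_singleton l hl v]
      rcases lt_or_eq_of_le hlast with h' | h'
      · rw [if_pos h']
        have := mem_le_asc' ha.1 (show l.length - 1 < l.length by omega)
        omega
      · have := ih ha.1 hwl hl
        rw [← h']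
        omega

lemma listMax_eq_last_of_wkInc {s : List ℕ} (h : WkInc s) (hs : s ≠ []) :
    listMax s = s.getD (s.length - 1) 0 := by
  have hlen : 0 < s.length := List.length_pos_iff.2 hs
  refine le_antisymm ?_ (getD_le_listMax s (by omega))
  obtain ⟨k, hk, hke⟩ := List.mem_iff_getElem.1 (listMax_mem hs)
  rw [← List.getD_eq_getElem _ 0 hk] at hke
  rw [← hke]
  have hk' : k ≤ s.length - 1 := by omega
  rcases eq_or_lt_of_le hk' with h' | h'
  · rw [h']
  · exact h k (s.length - 1) h' (by omega)

lemma listMax_le_asc_add_one {s : List ℕ} (ha : IsAscentSeq s) (hs : s ≠ []) :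
    listMax s ≤ asc s + 1 := by
  obtain ⟨k, hk, hke⟩ := List.mem_iff_getElem.1 (listMax_mem hs)
  rw [← List.getD_eq_getElem _ 0 hk] at hke
  rw [← hke]
  exact mem_le_asc' ha hk

/-- Key structural lemma: in a good sequence, just above any deficient value
there is an earlier entry exactly one bigger. -/
lemma succ_mem_of_def {s : List ℕ} (hg : Good s) {i j : ℕ} (hij : i < j)
    (hj : j < s.length) (hd : s.getD j 0 < s.getD i 0) :
    ∃ i' < j, s.getD i' 0 = s.getD j 0 + 1 := by
  classical
  set d := s.getD j 0 with hd_def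
  -- the finset of values above d occurring before j
  set F : Finset ℕ := ((Finset.range j).filter (fun i' => d < s.getD i' 0)).image
    (fun i' => s.getD i' 0) with hF
  have hFne : F.Nonempty := ⟨s.getD i 0, Finset.mem_image_of_mem _ (by
    simp only [Finset.mem_filter, Finset.mem_range]
    exact ⟨hij, hd⟩)⟩
  set w := F.min' hFne with hw
  have hwmem : w ∈ F := Finset.min'_mem _ _
  obtain ⟨iw, hiw, hiwe⟩ := Finset.mem_image.1 hwmem
  simp only [Finset.mem_filter, Finset.mem_range] at hiw
  have hwd : d < w := hiwe ▸ hiw.2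
  -- minimality: any earlier entry above d is ≥ w
  have hmin : ∀ q < j, d < s.getD q 0 → w ≤ s.getD q 0 := by
    intro q hq hdq
    exact Finset.min'_le _ _ (Finset.mem_image_of_mem _ (by
      simp only [Finset.mem_filter, Finset.mem_range]; exact ⟨hq, hdq⟩))
  by_cases hcase : w = d + 1
  · exact ⟨iw, hiw.1, hiwe.trans hcase⟩
  exfalso
  have hw2 : d + 2 ≤ w := by omega
  -- least index with value ≥ w
  have hex : ∃ q, w ≤ s.getD q 0 := ⟨iw, hiwe.ge⟩
  set p := Nat.find hex with hp
  have hpw : w ≤ s.getD p 0 := Nat.find_spec hex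
  have hplt : ∀ q < p, s.getD q 0 < w := by
    intro q hq
    have := Nat.find_min hex hq
    omega
  have hple : p ≤ iw := Nat.find_min' hex hiwe.ge
  have hpj : p < j := by omega
  have hplen : p < s.length := by omega
  have hp0 : 0 < p := by
    rcases Nat.eq_zero_or_pos p with h0 | h0
    · exfalso
      have hzero := hg.1.1 (by omega)
      rw [h0] at hpw
      omega
    · exact h0
  -- entries before p are ≤ d
  have hbd : ∀ q < p, s.getD q 0 ≤ d := by
    intro q hq
    by_contra hcon
    have := hmin q (by omega) (by omega)
    have := hplt q hq
    omega
  -- take p is weakly increasing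
  have hwk : WkInc (s.take p) := by
    intro q q' hqq' hq'
    rw [List.length_take] at hq'
    have hq'p : q' < p := by omega
    rw [getD_take hq'p (by omega), getD_take (by omega) (by omega)]
    by_contra hcon
    apply hg.2
    exact ⟨q, q', p, hqq', hq'p, hplen, by omega, by
      have h1 := hbd q (by omega)
      omega⟩
  -- bound via ascent property
  have htne : s.take p ≠ [] := by
    have : (s.take p).length = p := by rw [List.length_take]; omega
    intro hcon
    rw [hcon] at this
    simp at this
    omega
  have hlen_take : (s.take p).length = p := by rw [List.length_take]; omega
  have h0take : (s.take p).getD 0 0 = 0 := by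
    rw [getD_take hp0 (by omega)]
    exact hg.1.1 (by omega)
  have hasc : asc (s.take p) ≤ d := by
    have h1 := asc_add_head_le_last hwk htne
    rw [h0take, hlen_take, getD_take (by omega : p - 1 < p) (by omega)] at h1
    have h2 := hbd (p - 1) (by omega)
    omega
  have hstep := hg.1.2 p hp0 hplen
  omega

/-- The extension characterization: appending `v` to a good nonempty sequence
stays good iff `v ≤ bnd s`. -/
lemma good_append_iff {s : List ℕ} (hg : Good s) (hs : s ≠ []) (v : ℕ) :
    Good (s ++ [v]) ↔ v ≤ bnd s := by
  have hlen : 0 < s.length := List.length_pos_iff.2 hs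
  constructor
  · rintro ⟨ha, hc⟩
    rw [isAscentSeq_append_iff s hs v] at ha
    rw [contains102_append_iff] at hc
    push_neg at hc
    by_contra hcon
    push_neg at hcon
    by_cases hw : WkInc s
    · -- bnd = listMax + 1, and v ≤ asc + 1 ≤ listMax + 1
      rw [bnd_of_wkInc hw] at hcon
      have h1 : asc s ≤ listMax s := by
        have h2 := asc_add_head_le_last hw hs
        rw [hg.1.1 hlen] at h2
        have h3 := getD_le_listMax s (show s.length - 1 < s.length by omega)
        omega
      omega
    · obtain ⟨j, hj, ⟨i, hij, hd⟩, heq⟩ := bnd_spec hw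
      obtain ⟨i', hi'j, hi'⟩ := succ_mem_of_def hg hij hj hd
      have := hc.2 i' j hi'j hj (by omega)
      omega
  · intro hv
    have hasc : v ≤ asc s + 1 := by
      by_cases hw : WkInc s
      · have h1 : listMax s ≤ asc s := by
          rw [listMax_eq_last_of_wkInc hw hs]
          exact last_le_asc hg.1 hw hs
        have := bnd_of_wkInc hw
        omega
      · have h1 := bnd_le_listMax_of_not_wkInc hw
        have h2 := listMax_le_asc_add_one hg.1 hs
        omega
    refine ⟨(isAscentSeq_append_iff s hs v).2 ⟨hg.1, hasc⟩, ?_⟩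
    rw [contains102_append_iff]
    push_neg
    refine ⟨hg.2, ?_⟩
    intro a b hab hb h1
    have := bnd_le_of_def hab hb h1
    omega

lemma good_singleton_iff {s : List ℕ} (h : s.length = 1) :
    Good s ↔ s = [0] := by
  constructor
  · intro hg
    cases s with
    | nil => simp at h
    | cons a t =>
      cases t with
      | nil =>
        have := hg.1.1 (by simp)
        simp at this
        rw [this]
      | cons b u => simp at h
  · rintro rfl
    constructor
    · constructor
      · intro; rfl
      · intro i hi hi'; simp at hi'; omega
    · rintro ⟨a, b, c, hab, hbc, hc, _, _⟩
      simp at hc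
      omega

lemma good_nil : Good [] := by
  constructor
  · constructor
    · intro h; simp at h
    · intro i hi hi'; simp at hi'
  · rintro ⟨a, b, c, _, _, hc, _, _⟩
    simp at hc

lemma not_wkInc_ne_nil {s : List ℕ} (hw : ¬ WkInc s) : s ≠ [] := by
  intro h
  apply hw
  subst h
  intro i j hij hj
  simp at hj

lemma dset_append_iff {s : List ℕ} (v : ℕ) {j : ℕ} :
    j ∈ dset (s ++ [v]) ↔ j ∈ dset s ∨ (j = s.length ∧ ∃ i < s.length, v < s.getD i 0) := by
  rw [mem_dset_iff, mem_dset_iff]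
  constructor
  · rintro ⟨hj, i, hij, hd⟩
    simp only [List.length_append, List.length_singleton] at hj
    rcases lt_or_eq_of_le (Nat.lt_succ_iff.1 hj) with h | h
    · left
      rw [getD_append_left _ _ h, getD_append_left _ _ (by omega)] at hd
      exact ⟨h, i, hij, hd⟩
    · right
      subst h
      rw [getD_append_self, getD_append_left _ _ (by omega)] at hd
      exact ⟨rfl, i, hij, hd⟩
  · rintro (⟨hj, i, hij, hd⟩ | ⟨rfl, i, hi, hd⟩)
    · refine ⟨by simp; omega, i, hij, ?_⟩
      rwa [getD_append_left _ _ hj, getD_append_left _ _ (by omega)]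
    · refine ⟨by simp, i, hi, ?_⟩
      rwa [getD_append_self, getD_append_left _ _ hi]

lemma bnd_append_of_wkInc {s : List ℕ} (hs : s ≠ []) (hw : WkInc s) {v : ℕ}
    (hv : v ≤ bnd s) : bnd (s ++ [v]) = v + 1 := by
  by_cases hvM : listMax s ≤ v
  · have hw' : WkInc (s ++ [v]) := (wkInc_append_iff hs v).2 ⟨hw, hvM⟩
    rw [bnd_of_wkInc hw', listMax_append_singleton]
    omega
  · push_neg at hvM
    refine le_antisymm ?_ (Finset.le_min' _ _ _ ?_)
    · obtain ⟨k, hk, hke⟩ := List.mem_iff_getElem.1 (listMax_mem hs)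
      rw [← List.getD_eq_getElem _ 0 hk] at hke
      have h1 : (s ++ [v]).getD s.length 0 < (s ++ [v]).getD k 0 := by
        rw [getD_append_self, getD_append_left _ _ hk, hke]
        exact hvM
      have := bnd_le_of_def (show k < s.length from hk) (by simp) h1
      rwa [getD_append_self] at this
    · intro y hy
      rcases mem_bset_iff.1 hy with rfl | ⟨j, hj, rfl⟩
      · rw [listMax_append_singleton]
        omega
      · rcases (dset_append_iff v).1 hj with hj' | ⟨rfl, _⟩
        · exfalso
          rw [wkInc_iff_dset_empty.1 hw] at hj'
          simp at hj'
        · rw [getD_append_self]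

lemma bnd_append_of_not_wkInc {s : List ℕ} (hw : ¬ WkInc s) {v : ℕ}
    (hv : v ≤ bnd s) : bnd (s ++ [v]) = min (bnd s) (v + 1) := by
  have hs : s ≠ [] := not_wkInc_ne_nil hw
  have hbM := bnd_le_listMax_of_not_wkInc hw
  obtain ⟨j, hj, ⟨i, hij, hd⟩, heq⟩ := bnd_spec hw
  refine le_antisymm ?_ (Finset.le_min' _ _ _ ?_)
  · have hle1 : bnd (s ++ [v]) ≤ bnd s := by
      have h1 : (s ++ [v]).getD j 0 < (s ++ [v]).getD i 0 := by
        rwa [getD_append_left _ _ hj, getD_append_left _ _ (by omega)]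
      have := bnd_le_of_def hij (by simp; omega) h1
      rwa [getD_append_left _ _ hj, ← heq] at this
    rcases le_or_gt (bnd s) (v + 1) with h | h
    · omega
    · have hgt : v < s.getD i 0 := by omega
      have h1 : (s ++ [v]).getD s.length 0 < (s ++ [v]).getD i 0 := by
        rw [getD_append_self, getD_append_left _ _ (by omega)]
        exact hgt
      have := bnd_le_of_def (show i < s.length by omega) (by simp) h1
      rw [getD_append_self] at this
      omega
  · intro y hy
    rcases mem_bset_iff.1 hy with rfl | ⟨j', hj', rfl⟩
    · rw [listMax_append_singleton]
      have : max (listMax s) v = listMax s := by omega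
      rw [this]
      omega
    · rcases (dset_append_iff v).1 hj' with hj'' | ⟨rfl, _⟩
      · rw [mem_dset_iff] at hj''
        obtain ⟨hl, i', hi', hd'⟩ := hj''
        have := bnd_le_of_def hi' hl hd'
        rw [getD_append_left _ _ hl]
        omega
      · rw [getD_append_self]
        omega

lemma good_of_append {s : List ℕ} {v : ℕ} (hs : s ≠ []) (hg : Good (s ++ [v])) :
    Good s := by
  constructor
  · exact ((isAscentSeq_append_iff s hs v).1 hg.1).1
  · intro hc
    exact hg.2 ((contains102_append_iff s v).2 (Or.inl hc))

/-! ### Section 6 : finite model -/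

def TS : ℕ → Finset (List ℕ)
  | 0 => {[0]}
  | n+1 => (TS n).biUnion (fun s => (Finset.range (bnd s + 1)).image (fun v => s ++ [v]))

lemma mem_TS_iff {n : ℕ} {s : List ℕ} : s ∈ TS n ↔ s.length = n + 1 ∧ Good s := by
  induction n generalizing s with
  | zero =>
    show s ∈ ({[0]} : Finset (List ℕ)) ↔ _
    rw [Finset.mem_singleton]
    constructor
    · rintro rfl
      exact ⟨rfl, (good_singleton_iff (by rfl)).2 rfl⟩
    · rintro ⟨h1, h2⟩
      exact (good_singleton_iff h1).1 h2
  | succ n ih =>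
    show s ∈ (TS n).biUnion _ ↔ _
    rw [Finset.mem_biUnion]
    constructor
    · rintro ⟨t, ht, hs⟩
      obtain ⟨v, hv, rfl⟩ := Finset.mem_image.1 hs
      rw [Finset.mem_range] at hv
      obtain ⟨hlen, hgood⟩ := ih.1 ht
      have htne : t ≠ [] := by intro h; rw [h] at hlen; simp at hlen
      refine ⟨by simp [hlen], ?_⟩
      exact (good_append_iff hgood htne v).2 (by omega)
    · rintro ⟨hlen, hgood⟩
      rcases List.eq_nil_or_concat s with rfl | ⟨l, v, rfl⟩
      · simp at hlen
      · rw [List.concat_eq_append] at hgood hlen ⊢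
        have hllen : l.length = n + 1 := by simp at hlen; omega
        have hlne : l ≠ [] := by intro h; rw [h] at hllen; simp at hllen
        have hgl : Good l := good_of_append hlne hgood
        refine ⟨l, ih.2 ⟨hllen, hgl⟩, Finset.mem_image.2 ⟨v, ?_, rfl⟩⟩
        rw [Finset.mem_range]
        have := (good_append_iff hgl hlne v).1 hgood
        omega

lemma TS_length {n : ℕ} {s : List ℕ} (h : s ∈ TS n) : s.length = n + 1 :=
  (mem_TS_iff.1 h).1

lemma TS_good {n : ℕ} {s : List ℕ} (h : s ∈ TS n) : Good s :=
  (mem_TS_iff.1 h).2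

lemma TS_ne_nil {n : ℕ} {s : List ℕ} (h : s ∈ TS n) : s ≠ [] := by
  intro hc
  have := TS_length h
  rw [hc] at this
  simp at this

lemma sum_TS_succ (n : ℕ) (f : List ℕ → ℕ) :
    ∑ u ∈ TS (n+1), f u = ∑ s ∈ TS n, ∑ v ∈ Finset.range (bnd s + 1), f (s ++ [v]) := by
  show ∑ u ∈ (TS n).biUnion _, f u = _
  rw [Finset.sum_biUnion]
  · apply Finset.sum_congr rfl
    intro s _
    rw [Finset.sum_image]
    intro v _ v' _ h
    have := List.append_inj_right h rfl
    simpa using this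
  · intro s hs t ht hst
    simp only [Function.onFun]
    rw [Finset.disjoint_left]
    intro u hu hu'
    obtain ⟨v, _, rfl⟩ := Finset.mem_image.1 hu
    obtain ⟨v', _, he⟩ := Finset.mem_image.1 hu'
    apply hst
    have hlen : t.length = s.length := by
      rw [TS_length (show t ∈ TS n from ht), TS_length (show s ∈ TS n from hs)]
    exact (List.append_inj he.symm hlen.symm).1

/-! ### Section 7 : counting -/

lemma hockey (m r : ℕ) : ∑ u ∈ Finset.range m, u.choose r = m.choose (r+1) := by
  induction m with
  | zero => simp
  | succ m ih => rw [Finset.sum_range_succ, ih, Nat.choose_succ_succ']; omega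

lemma choose_add_two (b k : ℕ) :
    (b+2).choose (k+2) = b.choose (k+2) + 2 * b.choose (k+1) + b.choose k := by
  rw [Nat.choose_succ_succ' (b+1) (k+1), Nat.choose_succ_succ' b k, Nat.choose_succ_succ' b (k+1)]
  ring

lemma bnd_singleton : bnd [0] = 1 := by
  have hw : WkInc [0] := by intro i j hij hj; simp at hj; omega
  rw [bnd_of_wkInc hw]
  rfl

lemma dset_singleton : dset [0] = ∅ := by
  apply Finset.eq_empty_of_forall_notMem
  intro j hj
  rw [mem_dset_iff] at hj
  obtain ⟨hj1, i, hi, _⟩ := hj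
  simp at hj1
  omega

lemma TS_zero : TS 0 = {[0]} := rfl

/-- inner sum for the weakly increasing part statistic. -/
lemma inner_sorted_filter {s : List ℕ} (hg : Good s) (hs : s ≠ []) (hd : dset s = ∅)
    (j : ℕ) :
    ∑ v ∈ Finset.range (bnd s + 1),
        (if dset (s ++ [v]) = ∅ then (bnd (s ++ [v]) - 1).choose j else 0)
      = (bnd s - 1).choose j + (bnd s).choose j := by
  have hw : WkInc s := wkInc_iff_dset_empty.2 hd
  have hb : bnd s = listMax s + 1 := bnd_of_wkInc hw
  have hb1 : 1 ≤ bnd s := bnd_pos s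
  have key : ∀ v ≤ bnd s, (if dset (s ++ [v]) = ∅ then (bnd (s ++ [v]) - 1).choose j else 0)
      = if bnd s - 1 ≤ v then v.choose j else 0 := by
    intro v hv
    have hbnd' : bnd (s ++ [v]) = v + 1 := bnd_append_of_wkInc hs hw hv
    have hcond : dset (s ++ [v]) = ∅ ↔ bnd s - 1 ≤ v := by
      rw [← wkInc_iff_dset_empty, wkInc_append_iff hs]
      constructor
      · rintro ⟨_, h2⟩; omega
      · intro h; exact ⟨hw, by omega⟩
    rw [hbnd']
    simp only [Nat.add_sub_cancel]
    by_cases hc : dset (s ++ [v]) = ∅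
    · rw [if_pos hc, if_pos (hcond.1 hc)]
    · rw [if_neg hc, if_neg (fun h => hc (hcond.2 h))]
  rw [Finset.sum_congr rfl (fun v hv => key v (by rw [Finset.mem_range] at hv; omega))]
  rw [show bnd s + 1 = (bnd s - 1) + 1 + 1 by omega, Finset.sum_range_succ,
    Finset.sum_range_succ]
  rw [if_pos (le_refl _), if_pos (by omega)]
  have hz : ∑ v ∈ Finset.range (bnd s - 1), (if bnd s - 1 ≤ v then v.choose j else 0) = 0 := by
    apply Finset.sum_eq_zero
    intro v hv
    rw [Finset.mem_range] at hv
    rw [if_neg (by omega)]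
  rw [hz, show bnd s - 1 + 1 = bnd s by omega]
  omega

lemma inner_notsorted_filter {s : List ℕ} (hg : Good s) (hd : ¬ dset s = ∅) (j : ℕ) :
    ∑ v ∈ Finset.range (bnd s + 1),
        (if dset (s ++ [v]) = ∅ then (bnd (s ++ [v]) - 1).choose j else 0)
      = 0 := by
  have hw : ¬ WkInc s := fun h => hd (wkInc_iff_dset_empty.1 h)
  have hs : s ≠ [] := not_wkInc_ne_nil hw
  apply Finset.sum_eq_zero
  intro v _
  rw [if_neg]
  intro hc
  exact hw ((wkInc_append_iff hs v).1 (wkInc_iff_dset_empty.2 hc)).1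

lemma inner_sorted_choose {s : List ℕ} (hg : Good s) (hs : s ≠ []) (hd : dset s = ∅)
    (k : ℕ) :
    ∑ v ∈ Finset.range (bnd s + 1), (bnd (s ++ [v])).choose (k+1)
      = (bnd s + 2).choose (k+2) := by
  have hw : WkInc s := wkInc_iff_dset_empty.2 hd
  have key : ∀ v ∈ Finset.range (bnd s + 1), (bnd (s ++ [v])).choose (k+1) = (v+1).choose (k+1) := by
    intro v hv
    rw [Finset.mem_range] at hv
    rw [bnd_append_of_wkInc hs hw (by omega)]
  rw [Finset.sum_congr rfl key]
  have := Finset.sum_range_succ' (fun u => u.choose (k+1)) (bnd s + 1)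
  rw [← hockey (bnd s + 2) (k+1), this]
  simp

lemma inner_notsorted_choose {s : List ℕ} (hg : Good s) (hd : ¬ dset s = ∅) (k : ℕ) :
    ∑ v ∈ Finset.range (bnd s + 1), (bnd (s ++ [v])).choose (k+1)
      = (bnd s).choose (k+2) + 2 * (bnd s).choose (k+1) := by
  have hw : ¬ WkInc s := fun h => hd (wkInc_iff_dset_empty.1 h)
  have hb1 : 1 ≤ bnd s := bnd_pos s
  have key : ∀ v ∈ Finset.range (bnd s + 1), (bnd (s ++ [v])).choose (k+1)
      = (min (bnd s) (v+1)).choose (k+1) := by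
    intro v hv
    rw [Finset.mem_range] at hv
    rw [bnd_append_of_not_wkInc hw (by omega)]
  rw [Finset.sum_congr rfl key]
  rw [show bnd s + 1 = (bnd s - 1) + 1 + 1 by omega, Finset.sum_range_succ,
    Finset.sum_range_succ]
  rw [show min (bnd s) (bnd s - 1 + 1) = bnd s by omega,
    show min (bnd s) (bnd s - 1 + 1 + 1) = bnd s by omega]
  have hcong : ∀ v ∈ Finset.range (bnd s - 1),
      (min (bnd s) (v+1)).choose (k+1) = (v+1).choose (k+1) := by
    intro v hv
    rw [Finset.mem_range] at hv
    rw [show min (bnd s) (v+1) = v + 1 by omega]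
  rw [Finset.sum_congr rfl hcong]
  have h2 : ∑ v ∈ Finset.range (bnd s - 1), (v+1).choose (k+1)
      = (bnd s).choose (k+2) := by
    have := Finset.sum_range_succ' (fun u => u.choose (k+1)) (bnd s - 1)
    rw [← hockey (bnd s) (k+1), show bnd s = (bnd s - 1) + 1 by omega, this]
    simp
  rw [h2]
  ring

/-- H1: the weakly increasing part statistic. -/
lemma H1 (n : ℕ) : ∀ j : ℕ,
    ∑ s ∈ (TS n).filter (fun s => dset s = ∅), (bnd s - 1).choose j
      = n.choose j * 2^(n-j) := by
  induction n with
  | zero =>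
    intro j
    rw [TS_zero]
    rw [Finset.filter_singleton, if_pos dset_singleton, Finset.sum_singleton, bnd_singleton]
    simp
  | succ n ih =>
    intro j
    have step : ∑ s ∈ (TS (n+1)).filter (fun s => dset s = ∅), (bnd s - 1).choose j
        = ∑ s ∈ (TS n).filter (fun s => dset s = ∅),
            ((bnd s - 1).choose j + (bnd s).choose j) := by
      rw [Finset.sum_filter, sum_TS_succ]
      rw [Finset.sum_filter]
      apply Finset.sum_congr rfl
      intro s hsm
      have hg := TS_good hsm
      have hs := TS_ne_nil hsm
      by_cases hd : dset s = ∅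
      · rw [if_pos hd, inner_sorted_filter hg hs hd j]
      · rw [if_neg hd, inner_notsorted_filter hg hd j]
    rw [step, Finset.sum_add_distrib, ih j]
    -- second summand : Σ C(bnd, j)
    rcases Nat.eq_zero_or_pos j with rfl | hj
    · have : ∑ s ∈ (TS n).filter (fun s => dset s = ∅), (bnd s).choose 0
          = ∑ s ∈ (TS n).filter (fun s => dset s = ∅), (bnd s - 1).choose 0 := by
        apply Finset.sum_congr rfl; intro s _; simp
      rw [this, ih 0]
      simp only [Nat.choose_zero_right, Nat.sub_zero, one_mul]
      rw [pow_succ]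
      ring
    · obtain ⟨j', rfl⟩ : ∃ j', j = j' + 1 := ⟨j - 1, by omega⟩
      have hsplit : ∑ s ∈ (TS n).filter (fun s => dset s = ∅), (bnd s).choose (j'+1)
          = ∑ s ∈ (TS n).filter (fun s => dset s = ∅),
              ((bnd s - 1).choose j' + (bnd s - 1).choose (j'+1)) := by
        apply Finset.sum_congr rfl
        intro s _
        have hb1 := bnd_pos s
        rw [show bnd s = (bnd s - 1) + 1 by omega, Nat.choose_succ_succ']
        simp only [Nat.add_sub_cancel]
      rw [hsplit, Finset.sum_add_distrib, ih j', ih (j'+1)]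
      -- binomial algebra
      rw [Nat.choose_succ_succ' n j']
      rcases le_or_gt (j'+1) n with hle | hlt
      · have e1 : n - j' = (n - (j'+1)) + 1 := by omega
        have e2 : n + 1 - (j'+1) = (n - (j'+1)) + 1 := by omega
        rw [e1, e2, pow_succ]
        ring
      · have hz : n.choose (j'+1) = 0 := Nat.choose_eq_zero_of_lt hlt
        rcases le_or_gt (j'+1) (n+1) with hle2 | hlt2
        · have hj'n : j' = n := by omega
          subst hj'n
          simp [hz]
        · have hz2 : n.choose j' = 0 := Nat.choose_eq_zero_of_lt (by omega)
          simp [hz, hz2]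

lemma Id1 (n : ℕ) : ∀ k : ℕ,
    (∑ j ∈ Finset.range (k+1), (n+1).choose j * 2^(n+1-j)) + n.choose k * 2^(n-k)
      = 3 * ∑ j ∈ Finset.range (k+1), n.choose j * 2^(n-j) := by
  intro k
  induction k with
  | zero =>
    simp only [zero_add, Finset.range_one, Finset.sum_singleton, Nat.choose_zero_right,
      one_mul, Nat.sub_zero, Nat.add_sub_cancel]
    rw [pow_succ]
    ring
  | succ k ih =>
    rw [Finset.sum_range_succ, Finset.sum_range_succ (f := fun j => n.choose j * 2^(n-j))]
    have e : n + 1 - (k+1) = n - k := by omega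
    rw [e, Nat.choose_succ_succ' n k, add_mul]
    have key : n.choose (k+1) * 2^(n-k) = 2 * (n.choose (k+1) * 2^(n-(k+1))) := by
      rcases le_or_gt (k+1) n with h | h
      · rw [show n - k = n - (k+1) + 1 by omega, pow_succ]
        ring
      · rw [Nat.choose_eq_zero_of_lt h]
        ring
    linarith [ih, key]

lemma H2 (n : ℕ) : ∀ k : ℕ,
    (∑ s ∈ TS n, (bnd s).choose (k+1)) + (∑ j ∈ Finset.range k, n.choose j * 2^(n-j)) = 3^n := by
  induction n with
  | zero =>
    intro k
    rw [TS_zero, Finset.sum_singleton, bnd_singleton]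
    cases k with
    | zero => simp
    | succ k =>
      rw [Nat.choose_eq_zero_of_lt (by omega), Finset.sum_range_succ']
      have hz : ∑ j ∈ Finset.range k, Nat.choose 0 (j+1) * 2^(0-(j+1)) = 0 := by
        apply Finset.sum_eq_zero
        intro j _
        rw [Nat.choose_eq_zero_of_lt (by omega)]
        ring
      rw [hz]
      simp
  | succ n ih =>
    intro k
    -- transfer to level n
    have main : ∑ s ∈ TS (n+1), (bnd s).choose (k+1)
        = (∑ s ∈ TS n, (bnd s).choose (k+2)) + 2 * (∑ s ∈ TS n, (bnd s).choose (k+1))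
          + ∑ s ∈ (TS n).filter (fun s => dset s = ∅), (bnd s).choose k := by
      rw [sum_TS_succ]
      rw [← Finset.sum_filter_add_sum_filter_not (TS n) (fun s => dset s = ∅)
        (fun s => ∑ v ∈ Finset.range (bnd s + 1), (bnd (s ++ [v])).choose (k+1))]
      have hA : ∑ s ∈ (TS n).filter (fun s => dset s = ∅),
            (∑ v ∈ Finset.range (bnd s + 1), (bnd (s ++ [v])).choose (k+1))
          = ∑ s ∈ (TS n).filter (fun s => dset s = ∅),
            ((bnd s).choose (k+2) + 2 * (bnd s).choose (k+1) + (bnd s).choose k) := by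
        apply Finset.sum_congr rfl
        intro s hsm
        rw [Finset.mem_filter] at hsm
        rw [inner_sorted_choose (TS_good hsm.1) (TS_ne_nil hsm.1) hsm.2 k,
          choose_add_two]
      have hB : ∑ s ∈ (TS n).filter (fun s => ¬ dset s = ∅),
            (∑ v ∈ Finset.range (bnd s + 1), (bnd (s ++ [v])).choose (k+1))
          = ∑ s ∈ (TS n).filter (fun s => ¬ dset s = ∅),
            ((bnd s).choose (k+2) + 2 * (bnd s).choose (k+1)) := by
        apply Finset.sum_congr rfl
        intro s hsm
        rw [Finset.mem_filter] at hsm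
        rw [inner_notsorted_choose (TS_good hsm.1) hsm.2 k]
      rw [hA, hB]
      have hrec : ∑ s ∈ (TS n).filter (fun s => dset s = ∅),
            ((bnd s).choose (k+2) + 2 * (bnd s).choose (k+1) + (bnd s).choose k)
          = ∑ s ∈ (TS n).filter (fun s => dset s = ∅),
            ((bnd s).choose (k+2) + 2 * (bnd s).choose (k+1))
            + ∑ s ∈ (TS n).filter (fun s => dset s = ∅), (bnd s).choose k := by
        rw [← Finset.sum_add_distrib]
      rw [hrec]
      have hcomb : ∑ s ∈ (TS n).filter (fun s => dset s = ∅),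
            ((bnd s).choose (k+2) + 2 * (bnd s).choose (k+1))
          + ∑ s ∈ (TS n).filter (fun s => ¬ dset s = ∅),
            ((bnd s).choose (k+2) + 2 * (bnd s).choose (k+1))
          = ∑ s ∈ TS n, ((bnd s).choose (k+2) + 2 * (bnd s).choose (k+1)) :=
        Finset.sum_filter_add_sum_filter_not _ _ _
      rw [add_right_comm, hcomb, Finset.sum_add_distrib, ← Finset.mul_sum]
    rw [main]
    have pow31 : (3:ℕ)^(n+1) = 3 * 3^n := by rw [pow_succ]; ring
    cases k with
    | zero =>
      -- S term : Σ_{f∅} C(b,0) = 2^n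
      have hS : ∑ s ∈ (TS n).filter (fun s => dset s = ∅), (bnd s).choose 0
          = ∑ s ∈ (TS n).filter (fun s => dset s = ∅), (bnd s - 1).choose 0 := by
        apply Finset.sum_congr rfl; intro s _; simp
      rw [hS, H1 n 0]
      have h1 := ih 0
      have h2 := ih 1
      simp only [Finset.range_zero, Finset.sum_empty, add_zero, Finset.range_one,
        Finset.sum_singleton, Nat.choose_zero_right, one_mul, Nat.sub_zero] at h1 h2 ⊢
      linarith
    | succ k' =>
      have hS : ∑ s ∈ (TS n).filter (fun s => dset s = ∅), (bnd s).choose (k'+1)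
          = ∑ s ∈ (TS n).filter (fun s => dset s = ∅),
              ((bnd s - 1).choose k' + (bnd s - 1).choose (k'+1)) := by
        apply Finset.sum_congr rfl
        intro s _
        have hb1 := bnd_pos s
        rw [show bnd s = (bnd s - 1) + 1 by omega, Nat.choose_succ_succ']
        simp only [Nat.add_sub_cancel]
      rw [hS, Finset.sum_add_distrib, H1 n k', H1 n (k'+1)]
      have h1 := ih (k'+1)
      have h2 := ih (k'+2)
      rw [Finset.sum_range_succ] at h2
      have h3 := Id1 n k'
      linarith

lemma H3 (n : ℕ) : 2 * (TS n).card = 3^n + 1 := by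
  induction n with
  | zero => rw [TS_zero]; rfl
  | succ n ih =>
    have hcard : (TS (n+1)).card = 3^n + (TS n).card := by
      rw [Finset.card_eq_sum_ones, sum_TS_succ]
      have h1 : ∀ s ∈ TS n, ∑ _v ∈ Finset.range (bnd s + 1), 1 = (bnd s).choose 1 + 1 := by
        intro s _
        rw [Finset.sum_const, smul_eq_mul, mul_one, Finset.card_range, Nat.choose_one_right]
      rw [Finset.sum_congr rfl h1, Finset.sum_add_distrib]
      have h2 := H2 n 0
      simp only [Finset.range_zero, Finset.sum_empty, add_zero, zero_add] at h2
      rw [h2, Finset.sum_const, smul_eq_mul, mul_one]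
    rw [hcard]
    have : (3:ℕ)^(n+1) = 3 * 3^n := by rw [pow_succ]; ring
    omega


/-- The number of 102-avoiding ascent sequences of length `n` is
`(3^(n-1)+1)/2` (stated as: twice the count is `3^(n-1) + 1`). -/
theorem stmt14 (n : ℕ) (hn : 1 ≤ n) :
    2 * {s : List ℕ | s.length = n ∧ IsAscentSeq s ∧ ¬ Contains102 s}.ncard =
      3 ^ (n - 1) + 1 := by
  have hset : {s : List ℕ | s.length = n ∧ IsAscentSeq s ∧ ¬ Contains102 s}
      = ↑(TS (n-1)) := by
    ext s
    simp only [Set.mem_setOf_eq, Finset.coe_sort_coe, Finset.mem_coe]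
    rw [mem_TS_iff]
    constructor
    · rintro ⟨hl, ha, hc⟩
      exact ⟨by omega, ha, hc⟩
    · rintro ⟨hl, ha, hc⟩
      exact ⟨by omega, ha, hc⟩
  rw [hset, Set.ncard_coe_finset, H3 (n-1)]
end

section
/- In the construction C = 0101⋯01 W̃₁ W̃₂ ⋯ W̃_k (alternating prefix of length 2k, followed by shifted copies W̃_h = W_h + 1 + N₁ + ⋯ + N_{h−1} of weak ascent sequences W₁,…,W_k of length k with maxima N₁,…,N_k), the sequence C is an ascent sequence of length k² + 2k. -/
open Filter Topology

section AuxStmt16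

lemma aux_asc_cons_cons (x y : ℕ) (s : List ℕ) :
    asc (x :: y :: s) = (if x < y then 1 else 0) + asc (y :: s) := by
  by_cases h : x < y <;> simp [asc, h, Nat.add_comm]

lemma aux_asc_cons_le (x : ℕ) (s : List ℕ) : asc s ≤ asc (x :: s) := by
  cases s with
  | nil => simp [asc]
  | cons y t => rw [aux_asc_cons_cons]; omega

lemma aux_asc_append_ge (A B : List ℕ) : asc A + asc B ≤ asc (A ++ B) := by
  induction A with
  | nil => simp [asc]
  | cons a A ih =>
    cases A with
    | nil => simpa [asc] using aux_asc_cons_le a B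
    | cons b A' =>
      rw [List.cons_append, List.cons_append, aux_asc_cons_cons, aux_asc_cons_cons]
      rw [List.cons_append] at ih
      omega

lemma aux_asc_flatten_ge (M : List (List ℕ)) : (M.map asc).sum ≤ asc M.flatten := by
  induction M with
  | nil => simp [asc]
  | cons a t ih =>
    simp only [List.map_cons, List.sum_cons, List.flatten_cons]
    have := aux_asc_append_ge a t.flatten
    omega

lemma aux_asc_map_add (c : ℕ) : ∀ s : List ℕ, asc (s.map (fun x => x + c)) = asc s
  | [] => rfl
  | [_] => rfl
  | x :: y :: s => by
    have h := aux_asc_map_add c (y :: s)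
    simp only [List.map_cons] at *
    rw [aux_asc_cons_cons, aux_asc_cons_cons, h]
    congr 1
    simp

lemma aux_asc_add_one_le_length (s : List ℕ) (h : s ≠ []) : asc s + 1 ≤ s.length := by
  have h1 : asc s ≤ (s.zip s.tail).length := List.length_filter_le _ _
  rw [List.length_zip, List.length_tail] at h1
  have h2 : 0 < s.length := List.length_pos_iff.mpr h
  omega

lemma aux_listMax_le (s : List ℕ) (m : ℕ) (h : ∀ x ∈ s, x ≤ m) : listMax s ≤ m := by
  induction s with
  | nil => simp [listMax]
  | cons a t ih =>
    simp only [listMax, List.foldr_cons] at *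
    exact max_le (h a (by simp)) (ih (fun x hx => h x (by simp [hx])))

lemma aux_prefix_length (k : ℕ) :
    ((List.replicate k ([0,1] : List ℕ)).flatten).length = 2 * k := by
  induction k with
  | zero => simp
  | succ n ih => simp [List.replicate_succ] at *; omega

lemma aux_prefix_mem (k : ℕ) (x : ℕ)
    (h : x ∈ (List.replicate k ([0,1] : List ℕ)).flatten) : x ≤ 1 := by
  rw [List.mem_flatten] at h
  obtain ⟨l, hl, hx⟩ := h
  have := List.eq_of_mem_replicate hl
  subst this
  simp at hx
  omega

lemma aux_prefix_asc (k : ℕ) : k ≤ asc ((List.replicate k ([0,1] : List ℕ)).flatten) := by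
  induction k with
  | zero => simp
  | succ n ih =>
    rw [List.replicate_succ, List.flatten_cons]
    have e : ([0,1] : List ℕ) ++ (List.replicate n ([0,1] : List ℕ)).flatten
        = 0 :: 1 :: (List.replicate n ([0,1] : List ℕ)).flatten := rfl
    rw [e, aux_asc_cons_cons]
    have := aux_asc_cons_le 1 ((List.replicate n ([0,1] : List ℕ)).flatten)
    simp only [if_pos (by norm_num : (0:ℕ) < 1)]
    omega

lemma aux_prefix_getD (k : ℕ) (h : 0 < k) :
    ((List.replicate k ([0,1] : List ℕ)).flatten).getD 0 0 = 0 := by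
  cases k with
  | zero => omega
  | succ n => simp [List.replicate_succ]

lemma aux_flatten_split (M : List (List ℕ)) (h : ℕ) (hh : h < M.length) :
    M.flatten = (M.take h).flatten ++ (M[h] ++ (M.drop (h+1)).flatten) := by
  conv_lhs => rw [← List.take_append_drop h M]
  rw [List.drop_eq_getElem_cons hh]
  rw [List.flatten_append, List.flatten_cons]

lemma aux_length_flatten_uniform (M : List (List ℕ)) (k : ℕ) (h : ∀ l ∈ M, l.length = k) :
    M.flatten.length = M.length * k := by
  induction M with
  | nil => simp
  | cons a t ih =>
    simp only [List.flatten_cons, List.length_append, List.length_cons]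
    rw [h a (by simp), ih (fun l hl => h l (by simp [hl])), Nat.succ_mul]
    omega

lemma aux_key_step (A B R : List ℕ) (i : ℕ) (hA : A.length ≤ i)
    (hi : i < A.length + B.length) (hB : ∀ x ∈ B, x ≤ asc A) :
    (A ++ (B ++ R)).getD i 0 ≤ asc ((A ++ (B ++ R)).take i) + 1 := by
  have hlt : i - A.length < B.length := by omega
  have h1 : (A ++ (B ++ R)).getD i 0 = B.getD (i - A.length) 0 := by
    rw [List.getD_append_right _ _ _ _ hA, List.getD_append _ _ _ _ hlt]
  have hmem : B.getD (i - A.length) 0 ∈ B := by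
    rw [List.getD_eq_getElem _ _ hlt]; exact List.getElem_mem hlt
  have h2 : asc A ≤ asc ((A ++ (B ++ R)).take i) := by
    rw [List.take_append, List.take_of_length_le hA]
    have := aux_asc_append_ge A ((B ++ R).take (i - A.length))
    omega
  have := hB _ hmem
  omega

lemma aux_sum_take_ge (g : ℕ → ℕ) (M : List (List ℕ))
    (hM : ∀ i (hi : i < M.length), g i ≤ asc M[i]) :
    ∀ m, m ≤ M.length → ∑ i ∈ Finset.range m, g i ≤ ((M.take m).map asc).sum := by
  intro m
  induction m with
  | zero => simp
  | succ m ih =>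
    intro hm
    have hmlt : m < M.length := hm
    rw [Finset.sum_range_succ, List.take_succ, List.getElem?_eq_getElem hmlt]
    simp only [Option.toList_some, List.map_append, List.sum_append, List.map_cons,
      List.map_nil, List.sum_cons, List.sum_nil]
    have h1 := ih (le_of_lt hmlt)
    have h2 := hM m hmlt
    omega

lemma aux_main (k : ℕ) (P : List ℕ) (M : List (List ℕ))
    (hPlen : P.length = 2 * k) (hPasc : k ≤ asc P) (hP1 : ∀ x ∈ P, x ≤ 1)
    (hP0 : 0 < k → P.getD 0 0 = 0)
    (hMlen : M.length = k) (hblock : ∀ l ∈ M, l.length = k)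
    (hval : ∀ h (hh : h < M.length), ∀ x ∈ M[h],
        x ≤ k + ((M.take h).map asc).sum) :
    IsAscentSeq (P ++ M.flatten) ∧ (P ++ M.flatten).length = k ^ 2 + 2 * k := by
  have hkk : k ^ 2 = k * k := pow_two k
  have hflen : M.flatten.length = k * k := by
    rw [aux_length_flatten_uniform M k hblock, hMlen]
  have hClen : (P ++ M.flatten).length = k ^ 2 + 2 * k := by
    rw [List.length_append, hPlen, hflen, pow_two]; ring
  refine ⟨⟨?_, ?_⟩, hClen⟩
  · intro hpos
    have hk : 0 < k := by
      rcases Nat.eq_zero_or_pos k with rfl | hk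
      · rw [List.length_append, hPlen, hflen] at hpos; omega
      · exact hk
    rw [List.getD_append _ _ _ _ (by omega)]
    exact hP0 hk
  · intro i hi0 hilen
    rw [List.length_append, hPlen, hflen] at hilen
    by_cases hi : i < 2 * k
    · have h1 : (P ++ M.flatten).getD i 0 = P.getD i 0 := by
        rw [List.getD_append _ _ _ _ (by omega)]
      have h2 : P.getD i 0 ∈ P := by
        rw [List.getD_eq_getElem _ _ (by omega)]; exact List.getElem_mem (by omega)
      have := hP1 _ h2
      omega
    · have hk : 0 < k := by
        rcases Nat.eq_zero_or_pos k with rfl | hk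
        · omega
        · exact hk
      set t := i - 2 * k with ht
      have htlt : t < k * k := by omega
      have hh : t / k < k := Nat.div_lt_iff_lt_mul hk |>.mpr htlt
      set h := t / k with hhd
      have hmod : t % k < k := Nat.mod_lt _ hk
      have hdm : k * h + t % k = t := Nat.div_add_mod t k
      have hhM : h < M.length := by omega
      have hsplit := aux_flatten_split M h hhM
      have htake : ((M.take h).flatten).length = h * k := by
        rw [aux_length_flatten_uniform (M.take h) k
          (fun l hl => hblock l (List.mem_of_mem_take hl))]
        rw [List.length_take, min_eq_left (le_of_lt hhM)]
      have hBlen : (M[h]).length = k := hblock _ (List.getElem_mem hhM)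
      have hcm : h * k = k * h := Nat.mul_comm h k
      have hA : (P ++ (M.take h).flatten).length ≤ i := by
        rw [List.length_append, hPlen, htake]; omega
      have hi2 : i < (P ++ (M.take h).flatten).length + (M[h]).length := by
        rw [List.length_append, hPlen, htake, hBlen]; omega
      have hB : ∀ x ∈ M[h], x ≤ asc (P ++ (M.take h).flatten) := by
        intro x hx
        have h1 := hval h hhM x hx
        have h2 := aux_asc_append_ge P (M.take h).flatten
        have h3 := aux_asc_flatten_ge (M.take h)
        omega
      have := aux_key_step (P ++ (M.take h).flatten) (M[h])
        ((M.drop (h+1)).flatten) i hA hi2 hB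
      rw [hsplit, ← List.append_assoc]
      exact this

end AuxStmt16

/-- The construction `C = 0101⋯01 W̃₁⋯W̃ₖ` is an ascent sequence of length
`k² + 2k`. -/
theorem stmt16 (k : ℕ) (W : Fin k → List ℕ)
    (hlen : ∀ h, (W h).length = k) (hweak : ∀ h, IsWeakAscentSeq (W h)) :
    IsAscentSeq (buildC k W) ∧ (buildC k W).length = k ^ 2 + 2 * k := by
  classical
  rw [buildC]
  set f : Fin k → List ℕ := fun h =>
    (W h).map (fun x =>
      x + 1 + ∑ j ∈ Finset.univ.filter (fun j => j < h), listMax (W j)) with hf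
  set M : List (List ℕ) := List.ofFn f with hM
  set g : ℕ → ℕ := fun i => if hi : i < k then listMax (W ⟨i, hi⟩) else 0 with hg
  have hasc : ∀ i (hi : i < k), asc (f ⟨i, hi⟩) = asc (W ⟨i, hi⟩) := by
    intro i hi
    rw [hf]
    simp only
    rw [show (fun x => x + 1 + ∑ j ∈ Finset.univ.filter (fun j => j < (⟨i, hi⟩ : Fin k)),
        listMax (W j)) = (fun x => x + (1 + ∑ j ∈ Finset.univ.filter
        (fun j => j < (⟨i, hi⟩ : Fin k)), listMax (W j))) from by
      funext x; omega]
    exact aux_asc_map_add _ _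
  refine aux_main k _ M (aux_prefix_length k) (aux_prefix_asc k) (aux_prefix_mem k)
    (aux_prefix_getD k) (by simp [hM]) ?_ ?_
  · intro l hl
    rw [hM, List.mem_ofFn] at hl
    obtain ⟨h, rfl⟩ := hl
    simp [hf, hlen]
  · intro h hh x hx
    have hhk : h < k := by simpa [hM] using hh
    have hMh : M[h] = f ⟨h, hhk⟩ := by
      simp [hM]
    rw [hMh, hf] at hx
    simp only [List.mem_map] at hx
    obtain ⟨w, hw, rfl⟩ := hx
    have hWne : W ⟨h, hhk⟩ ≠ [] := by
      intro he
      have := hlen ⟨h, hhk⟩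
      rw [he] at this
      simp at this
      omega
    have hw1 : w + 1 ≤ k := by
      have h1 := hweak ⟨h, hhk⟩ w hw
      have h2 := aux_asc_add_one_le_length _ hWne
      rw [hlen] at h2
      omega
    have hS : ∑ j ∈ Finset.univ.filter (fun j => j < (⟨h, hhk⟩ : Fin k)), listMax (W j)
        = ∑ i ∈ Finset.range h, g i := by
      rw [Finset.sum_filter]
      have e1 : ∀ a : Fin k, (if a < (⟨h, hhk⟩ : Fin k) then listMax (W a) else 0)
          = (fun i => if i < h then g i else 0) (a : ℕ) := by
        intro a
        simp only [Fin.lt_def, hg]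
        by_cases hah : (a : ℕ) < h
        · simp [hah, a.isLt]
        · simp [hah]
      rw [Finset.sum_congr rfl (fun a _ => e1 a),
        Fin.sum_univ_eq_sum_range (fun i => if i < h then g i else 0)]
      rw [← Finset.sum_subset (Finset.range_subset_range.mpr (le_of_lt hhk))
        (fun x _ hx => by
          simp only [Finset.mem_range, not_lt] at hx
          simp [if_neg (by omega : ¬ x < h)])]
      refine Finset.sum_congr rfl ?_
      intro x hx
      simp only [Finset.mem_range] at hx
      simp [hx]
    have hMle : ∀ i (hi : i < M.length), g i ≤ asc M[i] := by
      intro i hi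
      have hik : i < k := by simpa [hM] using hi
      have hMi : M[i] = f ⟨i, hik⟩ := by simp [hM]
      rw [hMi, hasc i hik, hg]
      simp only [dif_pos hik]
      exact aux_listMax_le _ _ (hweak _)
    have hfin := aux_sum_take_ge g M hMle h (by simp [hM]; omega)
    rw [hS]
    omega
end

section
/- If a sequence (c_n)_{n≥1} of positive reals satisfies c_{m+n} ≥ c_m · c_n for all m, n ≥ 1 and c_{k²+2k} ≥ w_k^k for another supermultiplicative positive sequence (w_n) with c_n ≤ w_n for all n, then the limits μ_c = lim_{k→∞} c_k^{1/k} and μ_w = lim_{k→∞} w_k^{1/k} exist in [0, ∞] and μ_c = μ_w. -/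
open Filter Topology

namespace Stmt18Aux


lemma exp_surj : Function.Surjective EReal.exp := by
  intro y
  rcases eq_or_ne y 0 with rfl | h0
  · exact ⟨⊥, rfl⟩
  rcases eq_or_ne y ⊤ with rfl | ht
  · exact ⟨⊤, rfl⟩
  · refine ⟨(Real.log y.toReal : EReal), ?_⟩
    rw [EReal.exp_coe, Real.exp_log (ENNReal.toReal_pos h0 ht), ENNReal.ofReal_toReal ht]

lemma exp_continuous : Continuous EReal.exp := by
  have := (StrictMono.orderIsoOfSurjective EReal.exp EReal.exp_strictMono exp_surj).continuous
  rwa [StrictMono.coe_orderIsoOfSurjective] at this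

lemma iter (f : ℕ → ℝ) (h : ∀ m n, 1 ≤ m → 1 ≤ n → f m + f n ≤ f (m + n))
    (k : ℕ) (hk : 1 ≤ k) : ∀ q : ℕ, 1 ≤ q → (q : ℝ) * f k ≤ f (q * k) := by
  intro q hq
  induction q with
  | zero => omega
  | succ n ih =>
    rcases Nat.lt_or_ge n 1 with h1 | h1
    · interval_cases n
      simp
    · have h2 : (n : ℝ) * f k ≤ f (n * k) := ih h1
      have h3 : f (n * k) + f k ≤ f (n * k + k) := h (n * k) k (Nat.mul_pos h1 hk) hk
      have : (n + 1) * k = n * k + k := by ring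
      rw [this]
      push_cast
      nlinarith

lemma ev (f : ℕ → ℝ) (h : ∀ m n, 1 ≤ m → 1 ≤ n → f m + f n ≤ f (m + n))
    (k : ℕ) (hk : 1 ≤ k) {ε : ℝ} (hε : 0 < ε) :
    ∀ᶠ n in atTop, f k / k - ε ≤ f n / n := by
  have hne : (Finset.Icc k (2*k)).Nonempty := ⟨k, by simp; omega⟩
  set B := (Finset.Icc k (2*k)).inf' hne f with hB
  set C := 2 * |f k| + |B| with hC
  have hC0 : 0 ≤ C := by positivity
  filter_upwards [eventually_ge_atTop (2*k), eventually_ge_atTop (⌈C/ε⌉₊ + 1)] with n hn1 hn2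
  have hn0 : 1 ≤ n := by omega
  set q := n / k - 1 with hq
  set r := n % k + k with hr
  have hdiv2 : 2 ≤ n / k := (Nat.le_div_iff_mul_le (by omega)).mpr (by omega)
  have hq1 : 1 ≤ q := by omega
  have hnqr : n = q * k + r := by
    have hd : n / k * k + n % k = n := Nat.div_add_mod' n k
    have e1 : q * k = n/k * k - k := by rw [hq, Nat.sub_mul, one_mul]
    have e2 : 2*k ≤ n/k * k := Nat.mul_le_mul_right k hdiv2
    omega
  have hrIcc : r ∈ Finset.Icc k (2*k) := by
    rw [Finset.mem_Icc]
    have := Nat.mod_lt n (show 0 < k by omega)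
    omega
  have hfr : B ≤ f r := Finset.inf'_le f hrIcc
  have hiter : (q:ℝ) * f k ≤ f (q * k) := iter f h k hk q hq1
  have hadd : f (q*k) + f r ≤ f (q*k + r) := h (q*k) r (Nat.mul_pos hq1 (by omega)) (by omega)
  have h1 : (q:ℝ) * f k + B ≤ f n := by rw [hnqr]; linarith
  have hk0 : (0:ℝ) < k := by exact_mod_cast hk
  have hn0' : (0:ℝ) < n := by exact_mod_cast hn0
  have hqk : (q:ℝ) * k = (n:ℝ) - r := by
    rw [hnqr]; push_cast; ring
  have hrb : (k:ℝ) ≤ r ∧ (r:ℝ) ≤ 2*k := by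
    rw [Finset.mem_Icc] at hrIcc
    exact ⟨by exact_mod_cast hrIcc.1, by exact_mod_cast hrIcc.2⟩
  have habs : |(q:ℝ) - n/k| ≤ 2 := by
    rw [abs_le]
    constructor
    · have hqe : (q:ℝ) = ((n:ℝ) - r)/k := by field_simp [hqk]; exact hqk
      rw [hqe]
      have he : ((n:ℝ) - ↑r)/↑k - ↑n/↑k = -(↑r/↑k) := by field_simp; ring
      rw [he]
      have : (r:ℝ)/k ≤ 2 := by rw [div_le_iff₀ hk0]; linarith [hrb.2]
      linarith
    · have hqe : (q:ℝ) = ((n:ℝ) - r)/k := by field_simp [hqk]; exact hqk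
      rw [hqe]
      have hnr : (n:ℝ) - r ≤ n := by linarith [hrb.1, hk0]
      have : ((n:ℝ) - r)/k ≤ (n:ℝ)/k := by gcongr
      linarith
  have h2 : -(2*|f k|) ≤ ((q:ℝ) - (n:ℝ)/k) * f k := by
    have hm : |((q:ℝ) - (n:ℝ)/k) * f k| ≤ 2 * |f k| := by
      rw [abs_mul]
      exact mul_le_mul_of_nonneg_right habs (abs_nonneg _)
    nlinarith [neg_abs_le (((q:ℝ) - (n:ℝ)/k) * f k)]
  have h3 : ((n:ℝ)/k) * f k - C ≤ f n := by
    have hBb : -|B| ≤ B := neg_abs_le B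
    nlinarith
  have h4 : C / n ≤ ε := by
    rw [div_le_iff₀ hn0']
    have hce : C / ε ≤ (⌈C/ε⌉₊ : ℝ) := Nat.le_ceil _
    have hn2' : ((⌈C/ε⌉₊ : ℝ) + 1) ≤ n := by exact_mod_cast hn2
    rw [div_le_iff₀ hε] at hce
    nlinarith
  have h5 : ((n:ℝ)/k * f k - C)/n = f k / k - C/n := by
    field_simp
  calc f k / k - ε ≤ f k / k - C/n := by linarith
    _ = ((n:ℝ)/k * f k - C)/n := h5.symm
    _ ≤ f n / n := by gcongr

lemma coe_le_of_forall (a : ℝ) (y : EReal) (hy : ∀ ε : ℝ, 0 < ε → ((a - ε : ℝ) : EReal) ≤ y) :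
    (a : EReal) ≤ y := by
  have h1 : Tendsto (fun ε : ℝ => ((a - ε : ℝ) : EReal)) (𝓝[>] 0) (𝓝 (a : EReal)) := by
    have h2 : Tendsto (fun ε : ℝ => a - ε) (𝓝[>] 0) (𝓝 a) := by
      have := (tendsto_const_nhds (x := a) (f := 𝓝[>] (0:ℝ))).sub
        (tendsto_nhdsWithin_of_tendsto_nhds (continuous_id.tendsto (0:ℝ)))
      simpa using this
    exact (continuous_coe_real_ereal.tendsto a).comp h2
  exact le_of_tendsto h1 (eventually_nhdsWithin_of_forall (fun ε hε => hy ε hε))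

lemma fekete (f : ℕ → ℝ) (h : ∀ m n, 1 ≤ m → 1 ≤ n → f m + f n ≤ f (m + n)) :
    Tendsto (fun n : ℕ => ((f n / n : ℝ) : EReal)) atTop
      (𝓝 (⨆ k : ℕ, ((f (k+1) / (k+1 : ℕ) : ℝ) : EReal))) := by
  set L := ⨆ k : ℕ, ((f (k+1) / (k+1 : ℕ) : ℝ) : EReal) with hL
  refine tendsto_of_liminf_eq_limsup ?_ ?_ (by isBoundedDefault) (by isBoundedDefault)
  · -- liminf = L
    apply le_antisymm
    · exact (liminf_le_limsup (by isBoundedDefault) (by isBoundedDefault)).trans (limsup_le_of_le (by isBoundedDefault)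
        ((eventually_ge_atTop 1).mono (fun n hn => by
          have : n = (n - 1) + 1 := by omega
          rw [this]
          exact le_iSup (fun k : ℕ => ((f (k+1) / (k+1 : ℕ) : ℝ) : EReal)) (n-1))))
    · rw [hL]
      apply iSup_le
      intro k
      apply coe_le_of_forall
      intro ε hε
      have hev := ev f h (k+1) (by omega) hε
      have : ((f (k+1) / (k+1 : ℕ) - ε : ℝ) : EReal) = liminf
          (fun _ : ℕ => ((f (k+1) / (k+1 : ℕ) - ε : ℝ) : EReal)) atTop := (liminf_const _).symm
      rw [this]
      exact liminf_le_liminf (hev.mono (fun n hn => by exact_mod_cast hn))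
        (by isBoundedDefault) (by isBoundedDefault)
  · -- limsup = L  (proved above as ≤; also ≥)
    apply le_antisymm
    · exact limsup_le_of_le (by isBoundedDefault)
        ((eventually_ge_atTop 1).mono (fun n hn => by
          have : n = (n - 1) + 1 := by omega
          rw [this]
          exact le_iSup (fun k : ℕ => ((f (k+1) / (k+1 : ℕ) : ℝ) : EReal)) (n-1)))
    · refine le_trans ?_ (liminf_le_limsup (by isBoundedDefault) (by isBoundedDefault))
      rw [hL]
      apply iSup_le
      intro k
      apply coe_le_of_forall
      intro ε hε
      have hev := ev f h (k+1) (by omega) hε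
      have : ((f (k+1) / (k+1 : ℕ) - ε : ℝ) : EReal) = liminf
          (fun _ : ℕ => ((f (k+1) / (k+1 : ℕ) - ε : ℝ) : EReal)) atTop := (liminf_const _).symm
      rw [this]
      exact liminf_le_liminf (hev.mono (fun n hn => by exact_mod_cast hn))
        (by isBoundedDefault) (by isBoundedDefault)


end Stmt18Aux

/-- Equality of growth constants: for supermultiplicative positive sequences
`c ≤ w` with `c_{k²+2k} ≥ w_k^k`, the limits `μ_c = lim c_k^{1/k}` and
`μ_w = lim w_k^{1/k}` exist in `[0,∞]` and coincide. -/
theorem stmt18 (c w : ℕ → ℝ)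
    (hcpos : ∀ n, 1 ≤ n → 0 < c n) (hwpos : ∀ n, 1 ≤ n → 0 < w n)
    (hcsm : ∀ m n, 1 ≤ m → 1 ≤ n → c m * c n ≤ c (m + n))
    (hwsm : ∀ m n, 1 ≤ m → 1 ≤ n → w m * w n ≤ w (m + n))
    (hkey : ∀ k, 1 ≤ k → w k ^ k ≤ c (k ^ 2 + 2 * k))
    (hle : ∀ n, 1 ≤ n → c n ≤ w n) :
    ∃ L : ENNReal,
      Tendsto (fun k : ℕ => ENNReal.ofReal (c k ^ ((k : ℝ)⁻¹))) atTop (𝓝 L) ∧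
      Tendsto (fun k : ℕ => ENNReal.ofReal (w k ^ ((k : ℝ)⁻¹))) atTop (𝓝 L) := by
  classical
  set f : ℕ → ℝ := fun n => Real.log (c n) with hf
  set g : ℕ → ℝ := fun n => Real.log (w n) with hg
  have hfsa : ∀ m n, 1 ≤ m → 1 ≤ n → f m + f n ≤ f (m + n) := by
    intro m n hm hn
    rw [hf]
    dsimp only
    rw [← Real.log_mul (hcpos m hm).ne' (hcpos n hn).ne']
    exact Real.log_le_log (mul_pos (hcpos m hm) (hcpos n hn)) (hcsm m n hm hn)
  have hgsa : ∀ m n, 1 ≤ m → 1 ≤ n → g m + g n ≤ g (m + n) := by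
    intro m n hm hn
    rw [hg]
    dsimp only
    rw [← Real.log_mul (hwpos m hm).ne' (hwpos n hn).ne']
    exact Real.log_le_log (mul_pos (hwpos m hm) (hwpos n hn)) (hwsm m n hm hn)
  have Tc := Stmt18Aux.fekete f hfsa
  have Tw := Stmt18Aux.fekete g hgsa
  set Lc := ⨆ k : ℕ, ((f (k+1) / (k+1 : ℕ) : ℝ) : EReal) with hLc
  set Lw := ⨆ k : ℕ, ((g (k+1) / (k+1 : ℕ) : ℝ) : EReal) with hLw
  have hLcw : Lc = Lw := by
    apply le_antisymm
    · apply iSup_mono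
      intro k
      have h1 : f (k+1) ≤ g (k+1) :=
        Real.log_le_log (hcpos (k+1) (by omega)) (hle (k+1) (by omega))
      have h2 : (0:ℝ) < ((k+1 : ℕ) : ℝ) := by positivity
      have h3 : f (k+1) / ((k+1 : ℕ) : ℝ) ≤ g (k+1) / ((k+1 : ℕ) : ℝ) := by gcongr
      exact_mod_cast h3
    · apply iSup_le
      intro k
      set K := k + 1 with hK
      have hK1 : 1 ≤ K := by omega
      have hKR : (0:ℝ) < (K:ℝ) := by positivity
      have hterm : ∀ m : ℕ, 1 ≤ m → (((m:ℝ) * g K / ((m:ℝ) * K + 2) : ℝ) : EReal) ≤ Lc := by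
        intro m hm
        have hmK : 1 ≤ m * K := Nat.mul_pos hm hK1
        set N := (m*K)^2 + 2*(m*K) with hN
        have hN1 : 1 ≤ N := by
          have := Nat.le_add_left (2*(m*K)) ((m*K)^2)
          omega
        have h1 : ((f N / (N : ℕ) : ℝ) : EReal) ≤ Lc := by
          rw [hLc, show N = N - 1 + 1 from (by omega)]
          exact le_iSup (fun j : ℕ => ((f (j+1) / (j+1 : ℕ) : ℝ) : EReal)) (N-1)
        refine le_trans ?_ h1
        apply EReal.coe_le_coe_iff.mpr
        have h2 : ((m*K : ℕ) : ℝ) * g (m*K) ≤ f N := by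
          have hlog := Real.log_le_log (pow_pos (hwpos (m*K) hmK) (m*K))
            (hkey (m*K) hmK)
          rwa [Real.log_pow] at hlog
        have h3 : (m:ℝ) * g K ≤ g (m*K) := Stmt18Aux.iter g hgsa K hK1 m hm
        set a : ℝ := ((m*K : ℕ) : ℝ) with ha
        have ha1 : (1:ℝ) ≤ a := by
          rw [ha]; exact_mod_cast hmK
        have ha0 : (0:ℝ) < a := by linarith
        have hNa : ((N:ℕ) : ℝ) = a * (a + 2) := by
          rw [hN, ha]; push_cast; ring
        have hN0 : (0:ℝ) < ((N:ℕ) : ℝ) := by rw [hNa]; positivity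
        have step1 : a * g (m*K) / ((N:ℕ) : ℝ) ≤ f N / ((N:ℕ) : ℝ) := by gcongr
        have step2 : a * g (m*K) / ((N:ℕ) : ℝ) = g (m*K) / (a + 2) := by
          rw [hNa]
          rw [div_eq_div_iff (by positivity) (by positivity)]
          ring
        have step3 : (m:ℝ) * g K / (a + 2) ≤ g (m*K) / (a + 2) := by gcongr
        have haK : a = (m:ℝ) * K := by rw [ha]; push_cast; ring
        calc (m:ℝ) * g K / ((m:ℝ) * K + 2) = (m:ℝ) * g K / (a + 2) := by rw [haK]
          _ ≤ g (m*K) / (a + 2) := step3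
          _ = a * g (m*K) / ((N:ℕ) : ℝ) := step2.symm
          _ ≤ f N / ((N:ℕ) : ℝ) := step1
      have hRlim : Tendsto (fun m : ℕ => (m:ℝ) * g K / ((m:ℝ) * K + 2)) atTop
          (𝓝 (g K / ((K:ℕ) : ℝ))) := by
        have t0 : Tendsto (fun m : ℕ => (2:ℝ) / m) atTop (𝓝 0) :=
          tendsto_const_div_atTop_nhds_zero_nat 2
        have t1 : Tendsto (fun m : ℕ => (K:ℝ) + 2/(m:ℝ)) atTop (𝓝 ((K:ℝ) + 0)) :=
          tendsto_const_nhds.add t0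
        rw [add_zero] at t1
        have t2 := (t1.inv₀ hKR.ne').const_mul (g K)
        rw [← div_eq_mul_inv] at t2
        apply t2.congr'
        filter_upwards [eventually_ge_atTop 1] with m hm
        have hm0 : (0:ℝ) < (m:ℝ) := by exact_mod_cast hm
        have hden : (0:ℝ) < (K:ℝ) + 2/(m:ℝ) := by positivity
        rw [← div_eq_mul_inv, div_eq_div_iff hden.ne' (by positivity)]
        field_simp
      have hlim : Tendsto (fun m : ℕ => (((m:ℝ) * g K / ((m:ℝ) * K + 2) : ℝ) : EReal)) atTop
          (𝓝 ((g K / ((K:ℕ) : ℝ) : ℝ) : EReal)) :=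
        (continuous_coe_real_ereal.tendsto _).comp hRlim
      exact le_of_tendsto hlim ((eventually_ge_atTop 1).mono hterm)
  refine ⟨EReal.exp Lc, ?_, ?_⟩
  · have hT := (Stmt18Aux.exp_continuous.tendsto Lc).comp Tc
    apply hT.congr'
    filter_upwards [eventually_ge_atTop 1] with n hn
    show EReal.exp ((f n / n : ℝ) : EReal) = ENNReal.ofReal (c n ^ ((n:ℝ)⁻¹))
    rw [EReal.exp_coe]
    congr 1
    rw [Real.rpow_def_of_pos (hcpos n hn), hf]
    rw [div_eq_mul_inv]
  · have hT := (Stmt18Aux.exp_continuous.tendsto Lw).comp Tw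
    rw [← hLcw] at hT
    apply hT.congr'
    filter_upwards [eventually_ge_atTop 1] with n hn
    show EReal.exp ((g n / n : ℝ) : EReal) = ENNReal.ofReal (w n ^ ((n:ℝ)⁻¹))
    rw [EReal.exp_coe]
    congr 1
    rw [Real.rpow_def_of_pos (hwpos n hn), hg]
    rw [div_eq_mul_inv]
end
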